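/- arXiv:2205.01496 — 2 statements merged into one kernel-verified Lean document; each statement's English description precedes it below -/
import Mathlib

section
/- For β > λ₁ and ε > 0, let f_{β,ε}(u) = ∫_Ω |Du|² dx - 2∫_Ω G_{β,ε}(u) dx. If ū ∈ H¹₀(Ω) satisfies ∫(ū⁺)² = ∫(ū⁻)² = 1 and ∫|Dū⁺|² < β, then lim_{t→+∞} t⁻² f_{β,ε}(tū⁺) = ∫|Dū⁺|² - β∫(ū⁺)² < 0 and lim_{t→0⁺} t⁻² f_{β,ε}(tū⁺) = ∫|Dū⁺|² > 0; consequently there exists t̄ > 0 maximizing t ↦ f_{β,ε}(-ū⁻ + tū⁺) over t ≥ 0, and -ū⁻ + t̄ū⁺ ∈ M^{β,ε}. -/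
open MeasureTheory Filter Set
open scoped RealInnerProductSpace ENNReal Topology

noncomputable section

abbrev Euc (N : ℕ) := EuclideanSpace ℝ (Fin N)

variable {N : ℕ}

/-- positive part of a function -/
def pPart (u : Euc N → ℝ) : Euc N → ℝ := fun x => max (u x) 0

/-- negative part of a function -/
def nPart (u : Euc N → ℝ) : Euc N → ℝ := fun x => max (-u x) 0

/-- Dirichlet energy `∫_Ω |Du|²` -/
def dirE (Ω : Set (Euc N)) (u : Euc N → ℝ) : ℝ := ∫ x in Ω, ‖gradient u x‖ ^ 2

/-- squared `L²(Ω)` norm -/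
def l2sq (Ω : Set (Euc N)) (u : Euc N → ℝ) : ℝ := ∫ x in Ω, (u x) ^ 2

/-- a model of membership in `H¹₀(Ω)` -/
def MemH10 (Ω : Set (Euc N)) (u : Euc N → ℝ) : Prop :=
  (∀ x ∉ Ω, u x = 0) ∧ MemLp u 2 (volume.restrict Ω) ∧
    MemLp (fun x => gradient u x) 2 (volume.restrict Ω)

/-- `u` is nontrivial in `Ω` -/
def Nontriv (Ω : Set (Euc N)) (u : Euc N → ℝ) : Prop :=
  ¬ u =ᵐ[volume.restrict Ω] (fun _ => (0 : ℝ))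

/-- weak solution of `Δu - α u⁻ + β u⁺ = 0` in `Ω` -/
def IsWeakSol (Ω : Set (Euc N)) (α β : ℝ) (u : Euc N → ℝ) : Prop :=
  ∀ ψ : Euc N → ℝ, MemH10 Ω ψ →
    ∫ x in Ω, ⟪gradient u x, gradient ψ x⟫
      = β * ∫ x in Ω, pPart u x * ψ x - α * ∫ x in Ω, nPart u x * ψ x

/-- the Fučík spectrum of `Ω` -/
def fucik (Ω : Set (Euc N)) : Set (ℝ × ℝ) :=
  {p | ∃ u, MemH10 Ω u ∧ Nontriv Ω u ∧ IsWeakSol Ω p.1 p.2 u}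

/-- weak eigenfunction of `-Δ` on `H¹₀(Ω)` -/
def IsEigenfun (Ω : Set (Euc N)) (μ : ℝ) (u : Euc N → ℝ) : Prop :=
  ∀ ψ : Euc N → ℝ, MemH10 Ω ψ →
    ∫ x in Ω, ⟪gradient u x, gradient ψ x⟫ = μ * ∫ x in Ω, u x * ψ x

/-- `μ` is an eigenvalue of `-Δ` on `H¹₀(Ω)` -/
def IsEigenvalue (Ω : Set (Euc N)) (μ : ℝ) : Prop :=
  ∃ u, MemH10 Ω u ∧ Nontriv Ω u ∧ IsEigenfun Ω μ u

/-- `lam1` is the first Dirichlet eigenvalue, simple, with positive normalized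
eigenfunction `e1` -/
def IsFirstEigen (Ω : Set (Euc N)) (lam1 : ℝ) (e1 : Euc N → ℝ) : Prop :=
  MemH10 Ω e1 ∧ (∀ x ∈ Ω, 0 < e1 x) ∧ l2sq Ω e1 = 1 ∧ IsEigenfun Ω lam1 e1 ∧
    (∀ u, MemH10 Ω u → lam1 * l2sq Ω u ≤ dirE Ω u) ∧
    (∀ u, MemH10 Ω u → dirE Ω u = lam1 * l2sq Ω u → ∃ c : ℝ, u = fun x => c * e1 x)

/-- the truncated nonlinearity `g_{β,ε}` -/
def gfun (β ε τ : ℝ) : ℝ := β * max (τ - ε) 0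

/-- its primitive `G_{β,ε}` -/
def Gfun (β ε t : ℝ) : ℝ := (β / 2) * (max (t - ε) 0) ^ 2

/-- the functional `f_{β,ε}` -/
def ffun (Ω : Set (Euc N)) (β ε : ℝ) (u : Euc N → ℝ) : ℝ :=
  dirE Ω u - 2 * ∫ x in Ω, Gfun β ε (u x)

/-- the pairing `f'_{β,ε}(u)[v]` -/
def fSlope (Ω : Set (Euc N)) (β ε : ℝ) (u v : Euc N → ℝ) : ℝ :=
  2 * ∫ x in Ω, ⟪gradient u x, gradient v x⟫ - 2 * ∫ x in Ω, gfun β ε (u x) * v x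

/-- the constraint set `M^{β,ε}` -/
def Mset (Ω : Set (Euc N)) (β ε : ℝ) : Set (Euc N → ℝ) :=
  {u | MemH10 Ω u ∧ l2sq Ω (nPart u) = 1 ∧ Nontriv Ω (pPart u) ∧
    dirE Ω (pPart u) = ∫ x in Ω, gfun β ε (pPart u x) * pPart u x}

/-- the constraint set for the minimization defining `α_β` -/
def Kset (Ω : Set (Euc N)) (β : ℝ) : Set (Euc N → ℝ) :=
  {u | MemH10 Ω u ∧ l2sq Ω (pPart u) = 1 ∧ l2sq Ω (nPart u) = 1 ∧
    dirE Ω (pPart u) = β}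

/-- the value `α_β` of the first nontrivial curve -/
def alphaB (Ω : Set (Euc N)) (β : ℝ) : ℝ :=
  sInf ((fun u => dirE Ω (nPart u)) '' Kset Ω β)


open scoped Classical

-- ### basic gradient helpers

lemma gradient_const_mul {f : Euc N → ℝ} {c : ℝ} (hc : c ≠ 0) (x : Euc N) :
    gradient (fun y => c * f y) x = c • gradient f x := by
  by_cases hf : DifferentiableAt ℝ f x
  · have h : fderiv ℝ (fun y => c * f y) x = c • fderiv ℝ f x := fderiv_const_mul hf c
    simp [gradient, h]
  · have hf2 : ¬ DifferentiableAt ℝ (fun y => c * f y) x := by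
      intro h
      have h3 : (fun y => c⁻¹ * (c * f y)) = f := by funext y; field_simp
      have h4 := h.const_mul c⁻¹
      rw [h3] at h4
      exact hf h4
    rw [gradient_eq_zero_of_not_differentiableAt hf,
      gradient_eq_zero_of_not_differentiableAt hf2, smul_zero]

lemma gradient_neg' {f : Euc N → ℝ} (x : Euc N) :
    gradient (fun y => -f y) x = -gradient f x := by
  have h := gradient_const_mul (f := f) (c := -1) (by norm_num) x
  simpa using h

lemma pPart_pos_iff {u : Euc N → ℝ} {x : Euc N} : 0 < pPart u x ↔ 0 < u x := by
  simp [pPart, lt_max_iff]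

lemma nPart_pos_iff {u : Euc N → ℝ} {x : Euc N} : 0 < nPart u x ↔ u x < 0 := by
  simp [nPart, lt_max_iff]

lemma pPart_eq_of_pos {u : Euc N → ℝ} {x : Euc N} (h : 0 < u x) : pPart u x = u x :=
  max_eq_left h.le

lemma pPart_eq_zero {u : Euc N → ℝ} {x : Euc N} (h : u x ≤ 0) : pPart u x = 0 :=
  max_eq_right h

lemma nPart_eq_of_neg {u : Euc N → ℝ} {x : Euc N} (h : u x < 0) : nPart u x = -u x :=
  max_eq_left (by linarith)

lemma nPart_eq_zero {u : Euc N → ℝ} {x : Euc N} (h : 0 ≤ u x) : nPart u x = 0 :=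
  max_eq_right (by linarith)

-- ### the pointwise formula for the gradient of the positive/negative part

lemma grad_pPart_eq (u : Euc N → ℝ) (x : Euc N) :
    gradient (pPart u) x =
      if DifferentiableAt ℝ (pPart u) x ∧ 0 < u x then gradient u x else 0 := by
  by_cases hdiff : DifferentiableAt ℝ (pPart u) x
  · by_cases hx : 0 < u x
    · rw [if_pos ⟨hdiff, hx⟩]
      apply Filter.EventuallyEq.gradient_eq
      have hpos : ∀ᶠ y in 𝓝 x, 0 < pPart u y :=
        hdiff.continuousAt (Ioi_mem_nhds (pPart_pos_iff.2 hx))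
      filter_upwards [hpos] with y hy
      exact pPart_eq_of_pos (pPart_pos_iff.1 hy)
    · rw [if_neg (by tauto)]
      have hmin : IsLocalMin (pPart u) x := by
        apply Filter.Eventually.of_forall
        intro y
        rw [pPart_eq_zero (not_lt.1 hx)]
        exact le_max_right _ _
      simp [gradient, hmin.fderiv_eq_zero]
  · rw [if_neg (by tauto)]
    exact gradient_eq_zero_of_not_differentiableAt hdiff

lemma grad_nPart_eq (u : Euc N → ℝ) (x : Euc N) :
    gradient (nPart u) x =
      if DifferentiableAt ℝ (nPart u) x ∧ u x < 0 then -gradient u x else 0 := by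
  by_cases hdiff : DifferentiableAt ℝ (nPart u) x
  · by_cases hx : u x < 0
    · rw [if_pos ⟨hdiff, hx⟩]
      have heq : (fun y => -u y) =ᶠ[𝓝 x] nPart u := by
        have hpos : ∀ᶠ y in 𝓝 x, 0 < nPart u y :=
          hdiff.continuousAt (Ioi_mem_nhds (nPart_pos_iff.2 hx))
        filter_upwards [hpos] with y hy
        exact (nPart_eq_of_neg (nPart_pos_iff.1 hy)).symm
      rw [← heq.gradient_eq, gradient_neg']
    · rw [if_neg (by tauto)]
      have hmin : IsLocalMin (nPart u) x := by
        apply Filter.Eventually.of_forall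
        intro y
        rw [nPart_eq_zero (not_lt.1 hx)]
        exact le_max_right _ _
      simp [gradient, hmin.fderiv_eq_zero]
  · rw [if_neg (by tauto)]
    exact gradient_eq_zero_of_not_differentiableAt hdiff

lemma grad_pPart_zero {u : Euc N → ℝ} {x : Euc N} (h : u x ≤ 0) :
    gradient (pPart u) x = 0 := by
  rw [grad_pPart_eq, if_neg (by intro hh; exact absurd hh.2 (not_lt.2 h))]

lemma grad_nPart_zero {u : Euc N → ℝ} {x : Euc N} (h : 0 ≤ u x) :
    gradient (nPart u) x = 0 := by
  rw [grad_nPart_eq, if_neg (by intro hh; exact absurd hh.2 (not_lt.2 h))]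

lemma grad_pPart_norm_le (u : Euc N → ℝ) (x : Euc N) :
    ‖gradient (pPart u) x‖ ≤ ‖gradient u x‖ := by
  rw [grad_pPart_eq]; split <;> simp

lemma grad_nPart_norm_le (u : Euc N → ℝ) (x : Euc N) :
    ‖gradient (nPart u) x‖ ≤ ‖gradient u x‖ := by
  rw [grad_nPart_eq]; split <;> simp

lemma grad_orth (u : Euc N → ℝ) (x : Euc N) :
    gradient (nPart u) x = 0 ∨ gradient (pPart u) x = 0 := by
  rcases lt_or_ge (u x) 0 with h | h
  · exact Or.inr (grad_pPart_zero h.le)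
  · exact Or.inl (grad_nPart_zero h)


-- ### gradient of  -n + t p  away from the zero set

lemma grad_w_of_ne (u : Euc N → ℝ) {t : ℝ} (ht : 0 < t) {x : Euc N} (hx : u x ≠ 0) :
    gradient (fun y => -nPart u y + t * pPart u y) x
      = -gradient (nPart u) x + t • gradient (pPart u) x := by
  set w : Euc N → ℝ := fun y => -nPart u y + t * pPart u y with hw
  have key1 : ∀ y, 0 < pPart u y → w y = t * pPart u y := by
    intro y hy
    simp only [hw]
    rw [nPart_eq_zero (pPart_pos_iff.1 hy).le, neg_zero, zero_add]
  have key2 : ∀ y, 0 < nPart u y → w y = -nPart u y := by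
    intro y hy
    simp only [hw]
    rw [pPart_eq_zero (nPart_pos_iff.1 hy).le, mul_zero, add_zero]
  rcases hx.lt_or_gt with hneg | hpos
  · rw [grad_pPart_zero hneg.le, smul_zero, add_zero]
    by_cases hn : DifferentiableAt ℝ (nPart u) x
    · have hev : ∀ᶠ y in 𝓝 x, 0 < nPart u y :=
        hn.continuousAt (Ioi_mem_nhds (nPart_pos_iff.2 hneg))
      have heq : w =ᶠ[𝓝 x] (fun y => -nPart u y) := by
        filter_upwards [hev] with y hy; exact key2 y hy
      rw [heq.gradient_eq, gradient_neg']
    · rw [gradient_eq_zero_of_not_differentiableAt hn, neg_zero]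
      apply gradient_eq_zero_of_not_differentiableAt
      intro hwd
      apply hn
      have hnx : 0 < nPart u x := nPart_pos_iff.2 hneg
      have hwx : w x < 0 := by rw [key2 x hnx]; linarith
      have hev : ∀ᶠ y in 𝓝 x, w y < 0 := hwd.continuousAt (Iio_mem_nhds hwx)
      have heq : nPart u =ᶠ[𝓝 x] (fun y => -w y) := by
        filter_upwards [hev] with y hy
        have hp0 : pPart u y = 0 := by
          by_contra hne
          have hppos : 0 < pPart u y :=
            lt_of_le_of_ne (le_max_right _ _) (Ne.symm hne)
          have hwy := key1 y hppos
          nlinarith [mul_pos ht hppos]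
        have : w y = -nPart u y := by
          simp only [hw]; rw [hp0, mul_zero, add_zero]
        simp only [this, neg_neg]
      exact heq.differentiableAt_iff.2 hwd.neg
  · rw [grad_nPart_zero hpos.le, neg_zero, zero_add]
    by_cases hp : DifferentiableAt ℝ (pPart u) x
    · have hev : ∀ᶠ y in 𝓝 x, 0 < pPart u y :=
        hp.continuousAt (Ioi_mem_nhds (pPart_pos_iff.2 hpos))
      have heq : w =ᶠ[𝓝 x] (fun y => t * pPart u y) := by
        filter_upwards [hev] with y hy; exact key1 y hy
      rw [heq.gradient_eq, gradient_const_mul ht.ne']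
    · rw [gradient_eq_zero_of_not_differentiableAt hp, smul_zero]
      apply gradient_eq_zero_of_not_differentiableAt
      intro hwd
      apply hp
      have hpx : 0 < pPart u x := pPart_pos_iff.2 hpos
      have hwx : 0 < w x := by rw [key1 x hpx]; exact mul_pos ht hpx
      have hev : ∀ᶠ y in 𝓝 x, 0 < w y := hwd.continuousAt (Ioi_mem_nhds hwx)
      have heq : pPart u =ᶠ[𝓝 x] (fun y => t⁻¹ * w y) := by
        filter_upwards [hev] with y hy
        have hn0 : nPart u y = 0 := by
          by_contra hne
          have hnpos : 0 < nPart u y :=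
            lt_of_le_of_ne (le_max_right _ _) (Ne.symm hne)
          have hwy := key2 y hnpos
          nlinarith
        have hwy : w y = t * pPart u y := by
          simp only [hw]; rw [hn0, neg_zero, zero_add]
        simp only [hwy]
        field_simp
      exact heq.differentiableAt_iff.2 (hwd.const_mul t⁻¹)

-- ### measure of a slab in Euclidean space

lemma abs_coord_le_norm {m : ℕ} (y : Euc m) (i : Fin m) : |y i| ≤ ‖y‖ := by
  rw [EuclideanSpace.norm_eq, ← Real.sqrt_sq_eq_abs]
  apply Real.sqrt_le_sqrt
  have h := Finset.single_le_sum (f := fun j => ‖y j‖ ^ 2)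
    (fun j _ => by positivity) (Finset.mem_univ i)
  simpa [Real.norm_eq_abs, sq_abs] using h

lemma slab_vol {m : ℕ} (e : Euc (m+1)) (he : ‖e‖ = 1) {a r : ℝ} (ha : 0 ≤ a) (hr : 0 ≤ r) :
    volume ({y : Euc (m+1) | |⟪e, y⟫| ≤ a} ∩ Metric.closedBall 0 r)
      ≤ ENNReal.ofReal ((2*a) * (2*r)^m) := by
  classical
  set e₀ : Euc (m+1) := EuclideanSpace.single 0 1 with he₀def
  have he₀ : ‖e₀‖ = ‖e‖ := by
    rw [he, he₀def, EuclideanSpace.norm_single]; norm_num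
  set R := Submodule.reflection (ℝ ∙ (e₀ - e))ᗮ with hRdef
  have hRe : R e₀ = e := Submodule.reflection_sub he₀
  set B : Set (Euc (m+1)) := {y | |y 0| ≤ a} ∩ Metric.closedBall 0 r with hB
  have hBmeas : MeasurableSet B := by
    apply MeasurableSet.inter
    · have hc : Continuous fun y : Euc (m+1) => y 0 :=
        (EuclideanSpace.proj (0 : Fin (m+1))).continuous
      exact measurableSet_le hc.abs.measurable measurable_const
    · exact measurableSet_closedBall
  have hsub : {y : Euc (m+1) | |⟪e, y⟫| ≤ a} ∩ Metric.closedBall 0 r ⊆ R.symm ⁻¹' B := by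
    rintro y ⟨hy1, hy2⟩
    constructor
    · show |(R.symm y) 0| ≤ a
      have h1 : ((R.symm y) 0 : ℝ) = ⟪e₀, R.symm y⟫ := by
        rw [he₀def, EuclideanSpace.inner_single_left]; simp
      have h2 : (⟪e₀, R.symm y⟫ : ℝ) = ⟪R e₀, R (R.symm y)⟫ :=
        (LinearIsometryEquiv.inner_map_map R e₀ (R.symm y)).symm
      rw [h1, h2, hRe, R.apply_symm_apply]
      exact hy1
    · show R.symm y ∈ Metric.closedBall (0 : Euc (m+1)) r
      rw [mem_closedBall_zero_iff, R.symm.norm_map]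
      exact mem_closedBall_zero_iff.1 hy2
  have himg : volume (R.symm ⁻¹' B) = volume B :=
    (LinearIsometryEquiv.measurePreserving R.symm).measure_preimage
      hBmeas.nullMeasurableSet
  set I : Fin (m+1) → Set ℝ := fun i => if i = 0 then Icc (-a) a else Icc (-r) r with hI
  have hsub2 : B ⊆ (MeasurableEquiv.toLp 2 (Fin (m+1) → ℝ)).symm ⁻¹' (univ.pi I) := by
    rintro y ⟨hy1, hy2⟩
    intro i _
    show (y : Fin (m+1) → ℝ) i ∈ I i
    simp only [hI]
    by_cases hi : i = 0
    · subst hi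
      rw [if_pos rfl, mem_Icc, ← abs_le]
      exact hy1
    · rw [if_neg hi, mem_Icc, ← abs_le]
      exact le_trans (abs_coord_le_norm y i) (mem_closedBall_zero_iff.1 hy2)
  have hImeas : ∀ i, MeasurableSet (I i) := by
    intro i; simp only [hI]; split <;> exact measurableSet_Icc
  have hvol2 : volume ((MeasurableEquiv.toLp 2 (Fin (m+1) → ℝ)).symm ⁻¹' (univ.pi I))
      = ∏ i, volume (I i) :=
    ((EuclideanSpace.volume_preserving_symm_measurableEquiv_toLp (Fin (m+1))).measure_preimage
      (MeasurableSet.univ_pi hImeas).nullMeasurableSet).trans (volume_pi_pi I)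
  have hprod : ∏ i, volume (I i) = ENNReal.ofReal (2*a) * ENNReal.ofReal (2*r) ^ m := by
    have h0 : I 0 = Icc (-a) a := if_pos rfl
    have hsucc : ∀ i : Fin m, I i.succ = Icc (-r) r := fun i => if_neg (Fin.succ_ne_zero i)
    rw [Fin.prod_univ_succ, h0, Finset.prod_congr rfl (fun i _ => by rw [hsucc i]),
      Finset.prod_const, Real.volume_Icc]
    congr 2
    · ring
    · rw [Real.volume_Icc]; congr 1; ring
    · simp
  calc volume ({y : Euc (m+1) | |⟪e, y⟫| ≤ a} ∩ Metric.closedBall 0 r)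
      ≤ volume (R.symm ⁻¹' B) := measure_mono hsub
    _ = volume B := himg
    _ ≤ volume ((MeasurableEquiv.toLp 2 (Fin (m+1) → ℝ)).symm ⁻¹' (univ.pi I)) :=
        measure_mono hsub2
    _ = ∏ i, volume (I i) := hvol2
    _ = ENNReal.ofReal (2*a) * ENNReal.ofReal (2*r) ^ m := hprod
    _ = ENNReal.ofReal ((2*a) * (2*r)^m) := by
        rw [← ENNReal.ofReal_pow (by linarith), ← ENNReal.ofReal_mul (by linarith)]

-- ### a.e. vanishing of the derivative on a zero set

lemma ae_zero_slope {m : ℕ} (s : Set (Euc (m+1))) (f : Euc (m+1) → ℝ)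
    (hf : ∀ y ∈ s, f y = 0) :
    ∀ᵐ x ∂(volume.restrict s), f x = 0 → DifferentiableAt ℝ f x → fderiv ℝ f x = 0 := by
  filter_upwards [Besicovitch.ae_tendsto_measure_inter_div volume s] with x hx hfx hdiff
  by_contra hd0
  set d := fderiv ℝ f x with hd
  set v : Euc (m+1) := (InnerProductSpace.toDual ℝ (Euc (m+1))).symm d with hv
  have hdv : ∀ z, (d z : ℝ) = ⟪v, z⟫ := fun z => by
    rw [hv, InnerProductSpace.toDual_symm_apply]
  have hvnorm : ‖v‖ = ‖d‖ := LinearIsometryEquiv.norm_map _ _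
  have hvpos : 0 < ‖v‖ := by rw [hvnorm]; exact norm_pos_iff.2 hd0
  set c₁ := volume (Metric.ball (0 : Euc (m+1)) 1) with hc₁
  have hc₁pos : 0 < c₁ := Metric.measure_ball_pos volume _ one_pos
  have hc₁fin : c₁ < ⊤ := measure_ball_lt_top
  have hhalf_ne : c₁ / 2 ≠ ⊤ := by
    exact (ENNReal.div_lt_top hc₁fin.ne (by norm_num)).ne
  have hhalf_pos : 0 < c₁ / 2 := ENNReal.div_pos hc₁pos.ne' (by norm_num)
  set δ : ℝ := (c₁ / 2).toReal / 2 ^ (m+1) with hδ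
  have hδpos : 0 < δ := by
    apply div_pos _ (by positivity)
    exact ENNReal.toReal_pos hhalf_pos.ne' hhalf_ne
  have hev : ∀ᶠ y in 𝓝 x, ‖f y - f x - d (y - x)‖ ≤ (δ * ‖v‖) * ‖y - x‖ :=
    hdiff.hasFDerivAt.isLittleO.def (by positivity)
  rcases Metric.eventually_nhds_iff.1 hev with ⟨ρ, hρpos, hρ⟩
  have hhalf : ∀ᶠ r in 𝓝[>] (0:ℝ),
      volume (s ∩ Metric.closedBall x r) / volume (Metric.closedBall x r) ≤ 1/2 := by
    filter_upwards [Ioo_mem_nhdsGT hρpos] with r hr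
    obtain ⟨hr0, hrρ⟩ := hr
    set e : Euc (m+1) := ‖v‖⁻¹ • v with he
    have hen : ‖e‖ = 1 := by
      rw [he, norm_smul, norm_inv, norm_norm]
      field_simp
    set S : Set (Euc (m+1)) :=
      {z : Euc (m+1) | |⟪e, z⟫| ≤ δ * r} ∩ Metric.closedBall 0 r with hS
    have hsub : s ∩ Metric.closedBall x r ⊆ (fun z => z - x) ⁻¹' S := by
      rintro y ⟨hys, hyball⟩
      have hdy : dist y x ≤ r := Metric.mem_closedBall.1 hyball
      have hb := hρ (lt_of_le_of_lt hdy hrρ)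
      rw [hf y hys, hfx, sub_zero, zero_sub, norm_neg] at hb
      have hyx : ‖y - x‖ ≤ r := by rwa [← dist_eq_norm]
      constructor
      · show |⟪e, y - x⟫| ≤ δ * r
        have h1 : |⟪v, y - x⟫| ≤ (δ * ‖v‖) * r := by
          rw [← hdv]
          calc |d (y - x)| = ‖d (y - x)‖ := (Real.norm_eq_abs _).symm
            _ ≤ (δ * ‖v‖) * ‖y - x‖ := hb
            _ ≤ (δ * ‖v‖) * r := by
                apply mul_le_mul_of_nonneg_left hyx (by positivity)
        rw [he, real_inner_smul_left, abs_mul, abs_inv, abs_norm]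
        rw [inv_mul_le_iff₀ hvpos]
        calc |⟪v, y - x⟫| ≤ (δ * ‖v‖) * r := h1
          _ = ‖v‖ * (δ * r) := by ring
      · show y - x ∈ Metric.closedBall (0 : Euc (m+1)) r
        rwa [mem_closedBall_zero_iff]
    have htrans : volume ((fun z : Euc (m+1) => z - x) ⁻¹' S) = volume S := by
      have hfun : (fun z : Euc (m+1) => z - x) = fun z => -x + z := by
        funext z; rw [sub_eq_neg_add]
      rw [hfun, measure_preimage_add]
    have hslab := slab_vol e hen (a := δ * r) (by positivity) hr0.le
    have hball : volume (Metric.closedBall x r)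
        = ENNReal.ofReal (r ^ (m+1)) * c₁ := by
      rw [hc₁, Measure.addHaar_closedBall volume x hr0.le, finrank_euclideanSpace_fin]
    have hnum : volume (s ∩ Metric.closedBall x r)
        ≤ ENNReal.ofReal (r ^ (m+1)) * (c₁ / 2) := by
      calc volume (s ∩ Metric.closedBall x r)
          ≤ volume ((fun z : Euc (m+1) => z - x) ⁻¹' S) := measure_mono hsub
        _ = volume S := htrans
        _ ≤ ENNReal.ofReal ((2*(δ*r)) * (2*r)^m) := hslab
        _ = ENNReal.ofReal (r ^ (m+1)) * (c₁ / 2) := by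
            have harith : (2*(δ*r)) * (2*r)^m = r ^ (m+1) * (2 ^ (m+1) * δ) := by
              rw [mul_pow]; ring
            have h2 : (2:ℝ) ^ (m+1) * δ = (c₁/2).toReal := by
              rw [hδ]; field_simp
            rw [harith, h2, ENNReal.ofReal_mul (by positivity),
              ENNReal.ofReal_toReal hhalf_ne]
    calc volume (s ∩ Metric.closedBall x r) / volume (Metric.closedBall x r)
        ≤ (ENNReal.ofReal (r ^ (m+1)) * (c₁ / 2))
            / (ENNReal.ofReal (r ^ (m+1)) * c₁) := by
          rw [hball]
          exact ENNReal.div_le_div_right hnum _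
      _ = (c₁ / 2) / c₁ := by
          apply ENNReal.mul_div_mul_left
          · simp [ENNReal.ofReal_eq_zero, not_le]
            positivity
          · exact ENNReal.ofReal_ne_top
      _ ≤ 1/2 := by
          rw [div_eq_mul_inv, div_eq_mul_inv, mul_right_comm,
            ENNReal.mul_inv_cancel hc₁pos.ne' hc₁fin.ne, one_mul, one_div]
  have hge : (1:ℝ≥0∞) ≤ 1/2 := le_of_tendsto hx hhalf
  have hlt : (1:ℝ≥0∞)/2 < 1 := ENNReal.half_lt_self one_ne_zero ENNReal.one_ne_top
  exact absurd hge hlt.not_ge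

-- ### a.e. splitting of the gradient

lemma ae_grad_w {m : ℕ} (u : Euc (m+1) → ℝ) {t : ℝ} (ht : 0 < t) :
    ∀ᵐ x ∂(volume : Measure (Euc (m+1))),
      gradient (fun y => -nPart u y + t * pPart u y) x
        = -gradient (nPart u) x + t • gradient (pPart u) x := by
  set w : Euc (m+1) → ℝ := fun y => -nPart u y + t * pPart u y with hw
  have hz : ∀ y ∈ {y : Euc (m+1) | u y = 0}, w y = 0 := by
    intro y hy
    have hy0 : u y = 0 := hy
    simp only [hw]
    rw [pPart_eq_zero (le_of_eq hy0), nPart_eq_zero (ge_of_eq hy0)]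
    ring
  have h1 := ae_imp_of_ae_restrict (ae_zero_slope {y : Euc (m+1) | u y = 0} w hz)
  filter_upwards [h1] with x hx
  rcases eq_or_ne (u x) 0 with h0 | h0
  · rw [grad_pPart_zero h0.le, grad_nPart_zero h0.ge, smul_zero, neg_zero, add_zero]
    by_cases hwd : DifferentiableAt ℝ w x
    · have hf := hx h0 (hz x h0) hwd
      simp [gradient, hf]
    · exact gradient_eq_zero_of_not_differentiableAt hwd
  · exact grad_w_of_ne u ht h0

-- ### scalar calculus for Gfun

lemma hasDerivAt_sq_max (c y : ℝ) :
    HasDerivAt (fun s => max (s - c) 0 ^ 2) (2 * max (y - c) 0) y := by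
  rcases lt_trichotomy y c with hlt | heq | hgt
  · rw [max_eq_right (by linarith), mul_zero]
    apply (hasDerivAt_const y (0:ℝ)).congr_of_eventuallyEq
    filter_upwards [Iio_mem_nhds hlt] with s hs
    have hs' : s < c := hs
    rw [max_eq_right (by linarith)]
    norm_num
  · subst heq
    have hzero : max (y - y) 0 = 0 := by simp
    rw [hzero, mul_zero, hasDerivAt_iff_isLittleO]
    simp only [hzero, smul_zero, sub_zero, ne_eq, zero_pow, OfNat.ofNat_ne_zero,
      not_false_eq_true]
    have hbigo : (fun s : ℝ => max (s - y) 0 ^ 2) =O[𝓝 y] fun s => (s - y)^2 := by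
      apply Asymptotics.IsBigO.of_bound 1
      apply Filter.Eventually.of_forall
      intro s
      have h1 : max (s - y) 0 ≤ |s - y| := max_le (le_abs_self _) (abs_nonneg _)
      have h2 : (0:ℝ) ≤ max (s - y) 0 := le_max_right _ _
      rw [Real.norm_eq_abs, Real.norm_eq_abs, one_mul]
      rw [abs_of_nonneg (by positivity), abs_of_nonneg (by positivity)]
      nlinarith [sq_abs (s - y)]
    apply hbigo.trans_isLittleO
    rw [Asymptotics.isLittleO_iff]
    intro c hc
    have hcont : Continuous (fun s : ℝ => |s - y|) :=
      (continuous_id.sub continuous_const).abs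
    have htd : Tendsto (fun s : ℝ => |s - y|) (𝓝 y) (𝓝 0) := by
      have := hcont.tendsto y
      simpa using this
    filter_upwards [htd (Iic_mem_nhds hc)] with s hs
    have hs' : |s - y| ≤ c := hs
    rw [Real.norm_eq_abs, Real.norm_eq_abs]
    have habs : |(s - y)^2| = |s - y| * |s - y| := by
      rw [abs_pow]; ring
    rw [habs]
    exact mul_le_mul_of_nonneg_right hs' (abs_nonneg _)
  · have hd : HasDerivAt (fun s : ℝ => (s - c)^2) (2*(y-c)) y := by
      have h1 := ((hasDerivAt_id y).sub_const c).fun_pow 2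
      simpa using h1
    rw [max_eq_left (by linarith)]
    apply hd.congr_of_eventuallyEq
    filter_upwards [Ioi_mem_nhds hgt] with s hs
    have hs' : c < s := hs
    rw [max_eq_left (by linarith)]

lemma hasDerivAt_Gfun (β ε y : ℝ) : HasDerivAt (Gfun β ε) (gfun β ε y) y := by
  have h := (hasDerivAt_sq_max ε y).const_mul (β/2)
  have heq : β/2 * (2 * max (y - ε) 0) = gfun β ε y := by unfold gfun; ring
  rw [heq] at h
  exact h

lemma Gfun_nonneg {β ε : ℝ} (hβ : 0 ≤ β) (y : ℝ) : 0 ≤ Gfun β ε y := by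
  unfold Gfun; positivity

lemma Gfun_le {β ε y : ℝ} (hβ : 0 ≤ β) (hε : 0 ≤ ε) : Gfun β ε y ≤ β/2 * y^2 := by
  unfold Gfun
  apply mul_le_mul_of_nonneg_left _ (by linarith)
  have h1 : max (y - ε) 0 ≤ |y| := by
    apply max_le _ (abs_nonneg y)
    have := le_abs_self y; linarith
  calc max (y-ε) 0 ^2 ≤ |y|^2 := by nlinarith [le_max_right (y-ε) (0:ℝ)]
    _ = y^2 := sq_abs y

lemma Gfun_eq_zero {β ε y : ℝ} (h : y ≤ ε) : Gfun β ε y = 0 := by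
  unfold Gfun; rw [max_eq_right (by linarith)]; ring

lemma abs_gfun_le {β ε y : ℝ} (hβ : 0 ≤ β) (hε : 0 ≤ ε) : |gfun β ε y| ≤ β * |y| := by
  unfold gfun
  rw [abs_mul, abs_of_nonneg hβ]
  apply mul_le_mul_of_nonneg_left _ hβ
  rw [abs_of_nonneg (le_max_right _ _)]
  apply max_le _ (abs_nonneg y)
  have := le_abs_self y; linarith

-- ### L² membership of the parts and their gradients

lemma pPart_abs_le (u : Euc N → ℝ) (x : Euc N) : ‖pPart u x‖ ≤ ‖u x‖ := by
  rw [Real.norm_eq_abs, Real.norm_eq_abs, abs_of_nonneg (le_max_right _ _)]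
  exact max_le (le_abs_self _) (abs_nonneg _)

lemma nPart_abs_le (u : Euc N → ℝ) (x : Euc N) : ‖nPart u x‖ ≤ ‖u x‖ := by
  rw [Real.norm_eq_abs, Real.norm_eq_abs, abs_of_nonneg (le_max_right _ _)]
  apply max_le _ (abs_nonneg _)
  rw [← abs_neg]
  exact le_abs_self _

lemma pPart_memL2 {Ω : Set (Euc N)} {u : Euc N → ℝ}
    (h2 : MemLp u 2 (volume.restrict Ω)) : MemLp (pPart u) 2 (volume.restrict Ω) :=
  h2.of_le ((continuous_id.max continuous_const).comp_aestronglyMeasurable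
    h2.aestronglyMeasurable) (ae_of_all _ (pPart_abs_le u))

lemma nPart_memL2 {Ω : Set (Euc N)} {u : Euc N → ℝ}
    (h2 : MemLp u 2 (volume.restrict Ω)) : MemLp (nPart u) 2 (volume.restrict Ω) :=
  h2.of_le ((continuous_neg.max continuous_const).comp_aestronglyMeasurable
    h2.aestronglyMeasurable) (ae_of_all _ (nPart_abs_le u))

lemma grad_pPart_aesm {Ω : Set (Euc N)} {u : Euc N → ℝ}
    (h2 : MemLp u 2 (volume.restrict Ω))
    (hg : AEStronglyMeasurable (fun x => gradient u x) (volume.restrict Ω)) :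
    AEStronglyMeasurable (fun x => gradient (pPart u) x) (volume.restrict Ω) := by
  obtain ⟨u₀, hu₀m, hu₀⟩ : ∃ u₀, StronglyMeasurable u₀ ∧ u =ᵐ[volume.restrict Ω] u₀ :=
    ⟨h2.aestronglyMeasurable.mk u, h2.aestronglyMeasurable.stronglyMeasurable_mk,
      h2.aestronglyMeasurable.ae_eq_mk⟩
  set S : Set (Euc N) := {x | DifferentiableAt ℝ (pPart u) x} ∩ {x | 0 < u₀ x} with hS
  have hSmeas : MeasurableSet S :=
    (measurableSet_of_differentiableAt ℝ (pPart u)).inter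
      (hu₀m.measurable measurableSet_Ioi)
  apply AEStronglyMeasurable.congr (f := S.indicator (fun x => gradient u x))
    (hg.indicator hSmeas)
  filter_upwards [hu₀] with x hx
  rw [Set.indicator_apply, grad_pPart_eq]
  have hiff : x ∈ S ↔ (DifferentiableAt ℝ (pPart u) x ∧ 0 < u x) := by
    simp only [hS, Set.mem_inter_iff, Set.mem_setOf_eq, hx]
  by_cases hcond : DifferentiableAt ℝ (pPart u) x ∧ 0 < u x
  · rw [if_pos hcond, if_pos (hiff.2 hcond)]
  · rw [if_neg hcond, if_neg (fun hxS => hcond (hiff.1 hxS))]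

lemma grad_nPart_aesm {Ω : Set (Euc N)} {u : Euc N → ℝ}
    (h2 : MemLp u 2 (volume.restrict Ω))
    (hg : AEStronglyMeasurable (fun x => gradient u x) (volume.restrict Ω)) :
    AEStronglyMeasurable (fun x => gradient (nPart u) x) (volume.restrict Ω) := by
  obtain ⟨u₀, hu₀m, hu₀⟩ : ∃ u₀, StronglyMeasurable u₀ ∧ u =ᵐ[volume.restrict Ω] u₀ :=
    ⟨h2.aestronglyMeasurable.mk u, h2.aestronglyMeasurable.stronglyMeasurable_mk,
      h2.aestronglyMeasurable.ae_eq_mk⟩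
  set S : Set (Euc N) := {x | DifferentiableAt ℝ (nPart u) x} ∩ {x | u₀ x < 0} with hS
  have hSmeas : MeasurableSet S :=
    (measurableSet_of_differentiableAt ℝ (nPart u)).inter
      (hu₀m.measurable measurableSet_Iio)
  apply AEStronglyMeasurable.congr (f := S.indicator (fun x => -gradient u x))
    ((hg.neg).indicator hSmeas)
  filter_upwards [hu₀] with x hx
  rw [Set.indicator_apply, grad_nPart_eq]
  have hiff : x ∈ S ↔ (DifferentiableAt ℝ (nPart u) x ∧ u x < 0) := by
    simp only [hS, Set.mem_inter_iff, Set.mem_setOf_eq, hx]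
  by_cases hcond : DifferentiableAt ℝ (nPart u) x ∧ u x < 0
  · rw [if_pos hcond, if_pos (hiff.2 hcond)]
  · rw [if_neg hcond, if_neg (fun hxS => hcond (hiff.1 hxS))]

lemma grad_pPart_memL2 {Ω : Set (Euc N)} {u : Euc N → ℝ}
    (h2 : MemLp u 2 (volume.restrict Ω))
    (hg : MemLp (fun x => gradient u x) 2 (volume.restrict Ω)) :
    MemLp (fun x => gradient (pPart u) x) 2 (volume.restrict Ω) :=
  hg.of_le (grad_pPart_aesm h2 hg.aestronglyMeasurable)
    (ae_of_all _ (fun x => by simpa using grad_pPart_norm_le u x))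

lemma grad_nPart_memL2 {Ω : Set (Euc N)} {u : Euc N → ℝ}
    (h2 : MemLp u 2 (volume.restrict Ω))
    (hg : MemLp (fun x => gradient u x) 2 (volume.restrict Ω)) :
    MemLp (fun x => gradient (nPart u) x) 2 (volume.restrict Ω) :=
  hg.of_le (grad_nPart_aesm h2 hg.aestronglyMeasurable)
    (ae_of_all _ (fun x => by simpa using grad_nPart_norm_le u x))


set_option maxHeartbeats 1000000 in
theorem stmt5 {N : ℕ} (hN : 1 ≤ N) (Ω : Set (Euc N)) (hΩo : IsOpen Ω)
    (hΩb : Bornology.IsBounded Ω) (hΩc : IsConnected Ω)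
    (lam1 : ℝ) (e1 : Euc N → ℝ) (heig : IsFirstEigen Ω lam1 e1)
    (β ε : ℝ) (hβ : lam1 < β) (hε : 0 < ε)
    (u : Euc N → ℝ) (hu : MemH10 Ω u)
    (hp : l2sq Ω (pPart u) = 1) (hn : l2sq Ω (nPart u) = 1)
    (hd : dirE Ω (pPart u) < β) :
    Tendsto (fun t : ℝ => ffun Ω β ε (t • pPart u) / t ^ 2) atTop
        (𝓝 (dirE Ω (pPart u) - β * l2sq Ω (pPart u))) ∧
      dirE Ω (pPart u) - β * l2sq Ω (pPart u) < 0 ∧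
      Tendsto (fun t : ℝ => ffun Ω β ε (t • pPart u) / t ^ 2) (𝓝[>] (0 : ℝ))
        (𝓝 (dirE Ω (pPart u))) ∧
      0 < dirE Ω (pPart u) ∧
      ∃ tb : ℝ, 0 < tb ∧
        (∀ t : ℝ, 0 ≤ t →
          ffun Ω β ε (-nPart u + t • pPart u) ≤ ffun Ω β ε (-nPart u + tb • pPart u)) ∧
        (-nPart u + tb • pPart u) ∈ Mset Ω β ε := by
  obtain ⟨m, rfl⟩ : ∃ m, N = m + 1 := ⟨N - 1, (Nat.succ_pred_eq_of_pos hN).symm⟩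
  obtain ⟨he1H, he1pos, he1l2, he1eig, hmin, hsimp⟩ := heig
  have hu2 : MemLp u 2 (volume.restrict Ω) := hu.2.1
  have hgu : MemLp (fun x => gradient u x) 2 (volume.restrict Ω) := hu.2.2
  have p2 : MemLp (pPart u) 2 (volume.restrict Ω) := pPart_memL2 hu2
  have n2 : MemLp (nPart u) 2 (volume.restrict Ω) := nPart_memL2 hu2
  have gp2 : MemLp (fun x => gradient (pPart u) x) 2 (volume.restrict Ω) :=
    grad_pPart_memL2 hu2 hgu
  have gn2 : MemLp (fun x => gradient (nPart u) x) 2 (volume.restrict Ω) :=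
    grad_nPart_memL2 hu2 hgu
  -- positivity of the first eigenvalue and of the Dirichlet energy of the positive part
  have hdirE_nonneg : ∀ v : Euc (m+1) → ℝ, 0 ≤ dirE Ω v := fun v =>
    integral_nonneg (fun x => by positivity)
  have he1dir : dirE Ω e1 = lam1 := by
    have h := he1eig e1 he1H
    have h1 : ∫ x in Ω, ⟪gradient e1 x, gradient e1 x⟫ = dirE Ω e1 := by
      unfold dirE
      apply integral_congr_ae
      apply ae_of_all
      intro x
      exact real_inner_self_eq_norm_sq _
    have h2 : ∫ x in Ω, e1 x * e1 x = 1 := by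
      rw [show (fun x => e1 x * e1 x) = fun x => e1 x ^ 2 from funext fun x => (sq (e1 x)).symm]
      exact he1l2
    rw [h1, h2, mul_one] at h
    exact h
  have hlam_nonneg : 0 ≤ lam1 := he1dir ▸ hdirE_nonneg e1
  have hβ0 : 0 ≤ β := le_trans hlam_nonneg hβ.le
  have pH10 : MemH10 Ω (pPart u) :=
    ⟨fun x hx => by simp [pPart, hu.1 x hx], p2, gp2⟩
  have hApos : 0 < dirE Ω (pPart u) := by
    rcases (hdirE_nonneg (pPart u)).lt_or_eq with h | h
    · exact h
    · exfalso
      have hlam0 : lam1 = 0 := by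
        have h1 := hmin (pPart u) pH10
        rw [hp, mul_one, ← h] at h1
        linarith
      obtain ⟨c, hc⟩ := hsimp (pPart u) pH10 (by rw [hlam0, zero_mul, ← h])
      have hcsq : c ^ 2 = 1 := by
        have h1 : l2sq Ω (pPart u) = c ^ 2 * l2sq Ω e1 := by
          unfold l2sq
          rw [← integral_const_mul]
          apply integral_congr_ae
          apply ae_of_all
          intro x
          rw [hc]
          ring
        rw [hp, he1l2, mul_one] at h1
        exact h1.symm
      obtain ⟨x₀, hx₀⟩ := hΩc.nonempty
      have hc1 : c = 1 := by
        have h1 : 0 ≤ pPart u x₀ := le_max_right _ _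
        rw [hc] at h1
        have h1' : 0 ≤ c * e1 x₀ := h1
        have h2 := he1pos x₀ hx₀
        have hc0 : 0 ≤ c := by nlinarith
        nlinarith
      have hnz : ∀ x ∈ Ω, nPart u x = 0 := by
        intro x hx
        apply nPart_eq_zero
        have heq : pPart u x = e1 x := by rw [hc, hc1]; simp
        have h2 : 0 < pPart u x := heq ▸ he1pos x hx
        exact (pPart_pos_iff.1 h2).le
      have hz : l2sq Ω (nPart u) = 0 := by
        unfold l2sq
        apply integral_eq_zero_of_ae
        rw [EventuallyEq, ae_restrict_iff' hΩo.measurableSet]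
        apply ae_of_all
        intro x hx
        rw [hnz x hx]
        norm_num
      rw [hn] at hz
      exact one_ne_zero hz
  -- the auxiliary functions
  set Φ : ℝ → ℝ := fun t => ∫ x in Ω, Gfun β ε (t * pPart u x) with hΦdef
  set Dd : ℝ → ℝ := fun t => ∫ x in Ω, gfun β ε (t * pPart u x) * pPart u x with hDdef
  set ψ : ℝ → ℝ := fun t => t ^ 2 * dirE Ω (pPart u) - 2 * Φ t with hψdef
  have hp_aesm : AEStronglyMeasurable (pPart u) (volume.restrict Ω) := p2.aestronglyMeasurable
  have hGcont : Continuous (Gfun β ε) := by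
    unfold Gfun
    exact continuous_const.mul (((continuous_id.sub continuous_const).max continuous_const).pow 2)
  have hgcont : Continuous (gfun β ε) := by
    unfold gfun
    exact continuous_const.mul ((continuous_id.sub continuous_const).max continuous_const)
  have hGmeas : ∀ t : ℝ, AEStronglyMeasurable (fun x => Gfun β ε (t * pPart u x))
      (volume.restrict Ω) := fun t =>
    hGcont.comp_aestronglyMeasurable (hp_aesm.const_mul t)
  have hpsq_int : Integrable (fun x => pPart u x ^ 2) (volume.restrict Ω) := p2.integrable_sq
  have hp_nonneg : ∀ x, 0 ≤ pPart u x := fun x => le_max_right _ _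
  have hGint : ∀ t : ℝ, Integrable (fun x => Gfun β ε (t * pPart u x)) (volume.restrict Ω) := by
    intro t
    apply Integrable.mono' (hpsq_int.const_mul (β/2 * t^2)) (hGmeas t)
    apply ae_of_all
    intro x
    rw [Real.norm_eq_abs, abs_of_nonneg (Gfun_nonneg hβ0 _)]
    calc Gfun β ε (t * pPart u x) ≤ β/2 * (t * pPart u x)^2 := Gfun_le hβ0 hε.le
      _ = β/2 * t^2 * pPart u x ^ 2 := by ring
  have hΦderiv : ∀ t₀ : ℝ, HasDerivAt Φ (Dd t₀) t₀ := by
    intro t₀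
    have key := hasDerivAt_integral_of_dominated_loc_of_deriv_le
      (μ := volume.restrict Ω)
      (F := fun t x => Gfun β ε (t * pPart u x))
      (F' := fun t x => gfun β ε (t * pPart u x) * pPart u x)
      (x₀ := t₀) (bound := fun x => β * (|t₀|+1) * pPart u x ^ 2)
      (Metric.ball_mem_nhds t₀ one_pos)
      (Eventually.of_forall (fun t => hGmeas t))
      (hGint t₀)
      ((hgcont.comp_aestronglyMeasurable (hp_aesm.const_mul t₀)).mul hp_aesm)
      ?hbound
      (hpsq_int.const_mul _)
      ?hdiff
    · exact key.2
    case hbound =>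
      apply ae_of_all
      intro x t htball
      have ht1 : |t| ≤ |t₀| + 1 := by
        have h1 : |t - t₀| < 1 := by
          have := mem_ball_iff_norm.1 htball
          rwa [Real.norm_eq_abs] at this
        calc |t| = |(t - t₀) + t₀| := by ring_nf
          _ ≤ |t - t₀| + |t₀| := abs_add_le _ _
          _ ≤ |t₀| + 1 := by linarith
      rw [Real.norm_eq_abs, abs_mul]
      calc |gfun β ε (t * pPart u x)| * |pPart u x|
          ≤ (β * |t * pPart u x|) * |pPart u x| := by
            apply mul_le_mul_of_nonneg_right (abs_gfun_le hβ0 hε.le) (abs_nonneg _)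
        _ = β * |t| * (|pPart u x| * |pPart u x|) := by rw [abs_mul]; ring
        _ ≤ β * (|t₀|+1) * (|pPart u x| * |pPart u x|) := by
            apply mul_le_mul_of_nonneg_right _ (by positivity)
            apply mul_le_mul_of_nonneg_left ht1 hβ0
        _ = β * (|t₀|+1) * pPart u x ^ 2 := by
            rw [abs_of_nonneg (hp_nonneg x)]; ring
    case hdiff =>
      apply ae_of_all
      intro x t _
      have h1 : HasDerivAt (fun s : ℝ => s * pPart u x) (pPart u x) t :=
        hasDerivAt_mul_const _
      exact HasDerivAt.comp (h₂ := Gfun β ε) (h := fun s : ℝ => s * pPart u x) t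
        (hasDerivAt_Gfun β ε (t * pPart u x)) h1
  have hψderiv : ∀ t : ℝ, HasDerivAt ψ (2*t*dirE Ω (pPart u) - 2 * Dd t) t := by
    intro t
    have h1 : HasDerivAt (fun s : ℝ => s ^ 2 * dirE Ω (pPart u)) (2*t*dirE Ω (pPart u)) t := by
      have h2 := (hasDerivAt_pow 2 t).mul_const (dirE Ω (pPart u))
      norm_num at h2
      exact h2
    exact h1.sub ((hΦderiv t).const_mul 2)
  -- scaling identities
  have hdirE_smul : ∀ t : ℝ, t ≠ 0 → dirE Ω (t • pPart u) = t^2 * dirE Ω (pPart u) := by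
    intro t ht
    have hfun : ∀ x, gradient (t • pPart u) x = t • gradient (pPart u) x := by
      intro x
      have heq : (t • pPart u) = fun y => t * pPart u y := by funext y; simp
      rw [heq, gradient_const_mul ht]
    unfold dirE
    calc ∫ x in Ω, ‖gradient (t • pPart u) x‖^2
        = ∫ x in Ω, t^2 * ‖gradient (pPart u) x‖^2 := by
          apply integral_congr_ae
          apply ae_of_all
          intro x
          show ‖gradient (t • pPart u) x‖^2 = t^2 * ‖gradient (pPart u) x‖^2
          rw [hfun x, norm_smul, Real.norm_eq_abs, mul_pow, sq_abs]
      _ = t^2 * ∫ x in Ω, ‖gradient (pPart u) x‖^2 := integral_const_mul _ _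
  have hGsmul : ∀ t : ℝ, (∫ x in Ω, Gfun β ε ((t • pPart u) x)) = Φ t := by
    intro t
    apply integral_congr_ae
    apply ae_of_all
    intro x
    simp [Pi.smul_apply, smul_eq_mul]
  have hffun_smul : ∀ t : ℝ, t ≠ 0 → ffun Ω β ε (t • pPart u) = ψ t := by
    intro t ht
    unfold ffun
    rw [hdirE_smul t ht, hGsmul t]
  -- limits of Φ t / t²
  have hΦlim_top : Tendsto (fun t => Φ t / t^2) atTop (𝓝 (β/2 * l2sq Ω (pPart u))) := by
    have hval : ∫ x in Ω, β/2 * pPart u x ^ 2 = β/2 * l2sq Ω (pPart u) := by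
      unfold l2sq; exact integral_const_mul _ _
    have hmeas1 : ∀ᶠ t : ℝ in atTop, AEStronglyMeasurable
        (fun x => Gfun β ε (t * pPart u x) / t^2) (volume.restrict Ω) :=
      Eventually.of_forall (fun t => by
        simp only [div_eq_mul_inv]
        exact (hGmeas t).mul aestronglyMeasurable_const)
    have hbound1 : ∀ᶠ t : ℝ in atTop, ∀ᵐ x ∂(volume.restrict Ω),
        ‖Gfun β ε (t * pPart u x) / t^2‖ ≤ β/2 * pPart u x ^ 2 := by
      filter_upwards [eventually_ge_atTop (1:ℝ)] with t ht
      apply ae_of_all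
      intro x
      have ht0 : (0:ℝ) < t := lt_of_lt_of_le one_pos ht
      rw [Real.norm_eq_abs, abs_div, abs_of_nonneg (Gfun_nonneg hβ0 _),
        abs_of_nonneg (by positivity : (0:ℝ) ≤ t^2), div_le_iff₀ (by positivity)]
      calc Gfun β ε (t * pPart u x) ≤ β/2 * (t * pPart u x)^2 := Gfun_le hβ0 hε.le
        _ = β/2 * pPart u x ^ 2 * t^2 := by ring
    have hptw1 : ∀ᵐ x ∂(volume.restrict Ω), Tendsto
        (fun t : ℝ => Gfun β ε (t * pPart u x) / t^2) atTop (𝓝 (β/2 * pPart u x ^ 2)) := by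
      apply ae_of_all
      intro x
      rcases eq_or_lt_of_le (hp_nonneg x) with hp0 | hppos
      · have hz : ∀ t : ℝ, Gfun β ε (t * pPart u x)/t^2 = 0 := fun t => by
          rw [← hp0, mul_zero, Gfun_eq_zero hε.le, zero_div]
        rw [show β/2 * pPart u x ^2 = 0 by rw [← hp0]; ring]
        simpa [hz] using (tendsto_const_nhds : Tendsto (fun _ : ℝ => (0:ℝ)) atTop _)
      · have hcont2 : Continuous fun s : ℝ => β/2 * max s 0 ^ 2 :=
          continuous_const.mul ((continuous_id.max continuous_const).pow 2)
        have h1 : Tendsto (fun t : ℝ => ε/t) atTop (𝓝 0) :=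
          tendsto_const_nhds.div_atTop tendsto_id
        have h2 : Tendsto (fun t : ℝ => pPart u x - ε/t) atTop (𝓝 (pPart u x)) := by
          simpa using tendsto_const_nhds.sub h1
        have h4 := (hcont2.tendsto (pPart u x)).comp h2
        rw [max_eq_left hppos.le] at h4
        apply Tendsto.congr' _ h4
        filter_upwards [eventually_gt_atTop (0:ℝ)] with t ht
        show β/2 * max (pPart u x - ε/t) 0 ^ 2 = Gfun β ε (t * pPart u x) / t^2
        unfold Gfun
        rw [eq_div_iff (by positivity)]
        have hmax : max (t * pPart u x - ε) 0 = t * max (pPart u x - ε/t) 0 := by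
          rw [mul_max_of_nonneg _ _ ht.le, mul_zero]
          congr 1
          field_simp
        rw [hmax, mul_pow]
        ring
    have hlim : Tendsto (fun t : ℝ => ∫ x in Ω, Gfun β ε (t * pPart u x) / t^2) atTop
        (𝓝 (∫ x in Ω, β/2 * pPart u x ^ 2)) :=
      tendsto_integral_filter_of_dominated_convergence _ hmeas1 hbound1
        (hpsq_int.const_mul _) hptw1
    have heq2 : (fun t : ℝ => Φ t / t^2)
        = fun t => ∫ x in Ω, Gfun β ε (t * pPart u x) / t^2 := by
      funext t
      rw [hΦdef]
      exact (integral_div _ _).symm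
    rw [heq2, ← hval]
    exact hlim
  have hΦlim_zero : Tendsto (fun t => Φ t / t^2) (𝓝[>] (0:ℝ)) (𝓝 0) := by
    have hmeas2 : ∀ᶠ t : ℝ in 𝓝[>] (0:ℝ), AEStronglyMeasurable
        (fun x => Gfun β ε (t * pPart u x) / t^2) (volume.restrict Ω) :=
      Eventually.of_forall (fun t => by
        simp only [div_eq_mul_inv]
        exact (hGmeas t).mul aestronglyMeasurable_const)
    have hbound2 : ∀ᶠ t : ℝ in 𝓝[>] (0:ℝ), ∀ᵐ x ∂(volume.restrict Ω),
        ‖Gfun β ε (t * pPart u x) / t^2‖ ≤ β/2 * pPart u x ^ 2 := by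
      filter_upwards [eventually_mem_nhdsWithin] with t ht
      have ht0 : (0:ℝ) < t := ht
      apply ae_of_all
      intro x
      rw [Real.norm_eq_abs, abs_div, abs_of_nonneg (Gfun_nonneg hβ0 _),
        abs_of_nonneg (by positivity : (0:ℝ) ≤ t^2), div_le_iff₀ (by positivity)]
      calc Gfun β ε (t * pPart u x) ≤ β/2 * (t * pPart u x)^2 := Gfun_le hβ0 hε.le
        _ = β/2 * pPart u x ^ 2 * t^2 := by ring
    have hptw2 : ∀ᵐ x ∂(volume.restrict Ω), Tendsto
        (fun t : ℝ => Gfun β ε (t * pPart u x) / t^2) (𝓝[>] (0:ℝ)) (𝓝 ((fun _ => (0:ℝ)) x)) := by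
      apply ae_of_all
      intro x
      have hev : ∀ᶠ t in 𝓝[>](0:ℝ), Gfun β ε (t * pPart u x)/t^2 = 0 := by
        have hden : (0:ℝ) < ε/(pPart u x + 1) := by
          apply div_pos hε
          have := hp_nonneg x
          linarith
        filter_upwards [Ioo_mem_nhdsGT hden] with t ht
        obtain ⟨ht0, htu⟩ := ht
        have hple : t * pPart u x ≤ ε := by
          have h0p := hp_nonneg x
          have h1 : t * (pPart u x + 1) < ε := by
            rw [← lt_div_iff₀ (by linarith)]
            exact htu
          nlinarith
        rw [Gfun_eq_zero hple, zero_div]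
      exact tendsto_const_nhds.congr' (hev.mono fun t h => h.symm)
    have hlim : Tendsto (fun t : ℝ => ∫ x in Ω, Gfun β ε (t * pPart u x) / t^2) (𝓝[>] (0:ℝ))
        (𝓝 (∫ x in Ω, (0:ℝ))) :=
      tendsto_integral_filter_of_dominated_convergence _ hmeas2 hbound2
        (hpsq_int.const_mul _) hptw2
    have heq3 : (fun t : ℝ => Φ t / t^2)
        = fun t => ∫ x in Ω, Gfun β ε (t * pPart u x) / t^2 := by
      funext t
      rw [hΦdef]
      exact (integral_div _ _).symm
    rw [heq3]
    simpa using hlim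
  -- part 1
  have part1 : Tendsto (fun t : ℝ => ffun Ω β ε (t • pPart u) / t ^ 2) atTop
      (𝓝 (dirE Ω (pPart u) - β * l2sq Ω (pPart u))) := by
    have h1 : Tendsto (fun t => dirE Ω (pPart u) - 2 * (Φ t/t^2)) atTop
        (𝓝 (dirE Ω (pPart u) - 2*(β/2 * l2sq Ω (pPart u)))) :=
      tendsto_const_nhds.sub (hΦlim_top.const_mul 2)
    rw [show dirE Ω (pPart u) - 2*(β/2 * l2sq Ω (pPart u))
      = dirE Ω (pPart u) - β * l2sq Ω (pPart u) by ring] at h1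
    apply h1.congr'
    filter_upwards [eventually_gt_atTop (0:ℝ)] with t ht
    rw [hffun_smul t ht.ne', hψdef]
    field_simp
  -- part 3
  have part3 : Tendsto (fun t : ℝ => ffun Ω β ε (t • pPart u) / t ^ 2) (𝓝[>] (0:ℝ))
      (𝓝 (dirE Ω (pPart u))) := by
    have h1 : Tendsto (fun t => dirE Ω (pPart u) - 2 * (Φ t/t^2)) (𝓝[>] (0:ℝ))
        (𝓝 (dirE Ω (pPart u) - 2*0)) :=
      tendsto_const_nhds.sub (hΦlim_zero.const_mul 2)
    rw [show dirE Ω (pPart u) - 2*(0:ℝ) = dirE Ω (pPart u) by ring] at h1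
    apply h1.congr'
    filter_upwards [eventually_mem_nhdsWithin] with t ht
    have ht0 : (0:ℝ) < t := ht
    rw [hffun_smul t ht0.ne', hψdef]
    field_simp
  -- existence of the maximiser
  have hψdiv_top : Tendsto (fun t => ψ t / t^2) atTop (𝓝 (dirE Ω (pPart u) - β)) := by
    have h1 : Tendsto (fun t => ffun Ω β ε (t • pPart u) / t ^ 2) atTop
        (𝓝 (dirE Ω (pPart u) - β * l2sq Ω (pPart u))) := part1
    rw [hp, mul_one] at h1
    apply h1.congr'
    filter_upwards [eventually_gt_atTop (0:ℝ)] with t ht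
    rw [hffun_smul t ht.ne']
  have hψ_bot : Tendsto ψ atTop atBot := by
    have hmul := Filter.Tendsto.neg_mul_atTop (by linarith : dirE Ω (pPart u) - β < 0)
      hψdiv_top (tendsto_pow_atTop (two_ne_zero))
    apply hmul.congr'
    filter_upwards [eventually_gt_atTop (0:ℝ)] with t ht
    field_simp
  have hψdiv_zero : Tendsto (fun t => ψ t / t^2) (𝓝[>] (0:ℝ)) (𝓝 (dirE Ω (pPart u))) := by
    apply part3.congr'
    filter_upwards [eventually_mem_nhdsWithin] with t ht
    have ht0 : (0:ℝ) < t := ht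
    rw [hffun_smul t ht0.ne']
  obtain ⟨t₀, ht₀div, ht₀pos⟩ :
      ∃ t₀ : ℝ, 0 < ψ t₀ / t₀^2 ∧ (0:ℝ) < t₀ := by
    have hev := hψdiv_zero.eventually (eventually_gt_nhds hApos)
    obtain ⟨t₀, h1, h2⟩ := (hev.and eventually_mem_nhdsWithin).exists
    exact ⟨t₀, h1, h2⟩
  have hψt₀ : 0 < ψ t₀ := by
    have h1 := mul_pos ht₀div (pow_pos ht₀pos 2)
    rwa [div_mul_cancel₀ _ (by positivity : (t₀:ℝ)^2 ≠ 0)] at h1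
  obtain ⟨T, hT⟩ := eventually_atTop.1 (hψ_bot.eventually (eventually_lt_atBot (ψ t₀)))
  set T' := max T t₀ with hT'def
  have hT'0 : (0:ℝ) ≤ T' := le_trans ht₀pos.le (le_max_right T t₀)
  have hcontψ : ContinuousOn ψ (Icc 0 T') := fun t _ =>
    (hψderiv t).differentiableAt.continuousAt.continuousWithinAt
  obtain ⟨tb, htbmem, htbmax⟩ :=
    isCompact_Icc.exists_isMaxOn (nonempty_Icc.2 hT'0) hcontψ
  have hmax : ∀ t : ℝ, 0 ≤ t → ψ t ≤ ψ tb := by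
    intro t ht
    rcases le_or_gt t T' with h | h
    · exact htbmax ⟨ht, h⟩
    · have h1 : ψ t < ψ t₀ := hT t (le_trans (le_max_left T t₀) h.le)
      have h2 : ψ t₀ ≤ ψ tb := htbmax ⟨ht₀pos.le, le_max_right T t₀⟩
      linarith
  have hψ0 : ψ 0 = 0 := by
    have hΦ0 : Φ 0 = 0 := by
      rw [hΦdef]
      simp only
      have hz : ∀ x, Gfun β ε (0 * pPart u x) = 0 := fun x => by
        rw [zero_mul]; exact Gfun_eq_zero hε.le
      simp [hz]
      exact Or.inr (Gfun_eq_zero hε.le)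
    rw [hψdef]
    simp [hΦ0]
  have htb_pos : 0 < tb := by
    rcases htbmem.1.lt_or_eq with h | h
    · exact h
    · exfalso
      have h1 : ψ tb = 0 := by rw [← h]; exact hψ0
      have h2 : ψ t₀ ≤ ψ tb := htbmax ⟨ht₀pos.le, le_max_right T t₀⟩
      linarith
  have hDtb : Dd tb = tb * dirE Ω (pPart u) := by
    have hloc : IsLocalMax ψ tb := by
      apply IsMaxOn.isLocalMax (s := Ici 0)
      · exact isMaxOn_iff.2 (fun t ht => hmax t ht)
      · exact Ici_mem_nhds htb_pos
    have hz := hloc.hasDerivAt_eq_zero (hψderiv tb)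
    linarith
  -- splitting of ffun along  -n + t p
  have hGpart : ∀ t : ℝ, (∫ x in Ω, Gfun β ε ((-nPart u + t • pPart u) x)) = Φ t := by
    intro t
    apply integral_congr_ae
    apply ae_of_all
    intro x
    simp only [Pi.add_apply, Pi.neg_apply, Pi.smul_apply, smul_eq_mul]
    rcases le_or_gt 0 (u x) with h | h
    · rw [nPart_eq_zero h, neg_zero, zero_add]
    · rw [pPart_eq_zero h.le, mul_zero, add_zero]
      rw [Gfun_eq_zero (by
        have h1 : 0 ≤ nPart u x := le_max_right _ _
        linarith), Gfun_eq_zero hε.le]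
  have hdir_w : ∀ t : ℝ, 0 ≤ t →
      dirE Ω (-nPart u + t • pPart u) = dirE Ω (nPart u) + t^2 * dirE Ω (pPart u) := by
    intro t htnn
    have hint_n : Integrable (fun x => ‖gradient (nPart u) x‖^2) (volume.restrict Ω) :=
      gn2.norm.integrable_sq
    have hint_p : Integrable (fun x => ‖gradient (pPart u) x‖^2) (volume.restrict Ω) :=
      gp2.norm.integrable_sq
    rcases htnn.lt_or_eq with ht | ht
    · have hfeq : (-nPart u + t • pPart u) = fun y => -nPart u y + t * pPart u y := by
        funext y; simp
      rw [hfeq]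
      unfold dirE
      have hae : ∀ᵐ x ∂(volume.restrict Ω),
          gradient (fun y => -nPart u y + t * pPart u y) x
            = -gradient (nPart u) x + t • gradient (pPart u) x :=
        ae_restrict_of_ae (ae_grad_w u ht)
      calc ∫ x in Ω, ‖gradient (fun y => -nPart u y + t * pPart u y) x‖^2
          = ∫ x in Ω, (‖gradient (nPart u) x‖^2 + t^2 * ‖gradient (pPart u) x‖^2) := by
            apply integral_congr_ae
            filter_upwards [hae] with x hx
            show ‖gradient (fun y => -nPart u y + t * pPart u y) x‖^2
              = ‖gradient (nPart u) x‖^2 + t^2 * ‖gradient (pPart u) x‖^2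
            rw [hx]
            rcases grad_orth u x with hh | hh
            · rw [hh, neg_zero, zero_add, norm_smul, Real.norm_eq_abs, mul_pow, sq_abs,
                norm_zero]
              ring
            · rw [hh, smul_zero, add_zero, norm_neg, norm_zero]
              ring
        _ = (∫ x in Ω, ‖gradient (nPart u) x‖^2)
              + ∫ x in Ω, t^2 * ‖gradient (pPart u) x‖^2 :=
            integral_add hint_n (hint_p.const_mul _)
        _ = (∫ x in Ω, ‖gradient (nPart u) x‖^2)
              + t^2 * ∫ x in Ω, ‖gradient (pPart u) x‖^2 := by
            rw [integral_const_mul]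
    · have hfeq : (-nPart u + t • pPart u) = fun y => -nPart u y := by
        funext y; rw [← ht]; simp
      rw [hfeq, ← ht]
      have h1 : dirE Ω (fun y => -nPart u y) = dirE Ω (nPart u) := by
        unfold dirE
        apply integral_congr_ae
        apply ae_of_all
        intro x
        show ‖gradient (fun y => -nPart u y) x‖^2 = ‖gradient (nPart u) x‖^2
        rw [gradient_neg', norm_neg]
      rw [h1]
      ring
  have hffun_eq : ∀ t : ℝ, 0 ≤ t →
      ffun Ω β ε (-nPart u + t • pPart u) = dirE Ω (nPart u) + ψ t := by
    intro t ht
    unfold ffun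
    rw [hdir_w t ht, hGpart t, hψdef]
    ring
  -- the function identities for pPart / nPart of the combination
  have hpPw : pPart (-nPart u + tb • pPart u) = tb • pPart u := by
    funext x
    simp only [pPart, nPart, Pi.add_apply, Pi.neg_apply, Pi.smul_apply, smul_eq_mul]
    rcases le_or_gt 0 (u x) with h | h
    · rw [show max (-u x) 0 = 0 from max_eq_right (by linarith), neg_zero, zero_add]
      exact max_eq_left (mul_nonneg htb_pos.le (le_max_right _ _))
    · rw [show max (u x) 0 = 0 from max_eq_right h.le, mul_zero, add_zero,
        show max (-u x) 0 = -u x from max_eq_left (by linarith), neg_neg]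
      exact max_eq_right h.le
  have hnPw : nPart (-nPart u + tb • pPart u) = nPart u := by
    funext x
    simp only [nPart, pPart, Pi.add_apply, Pi.neg_apply, Pi.smul_apply, smul_eq_mul]
    rcases le_or_gt 0 (u x) with h | h
    · rw [show max (-u x) 0 = 0 from max_eq_right (by linarith), neg_zero, zero_add]
      exact max_eq_right (by
        have := mul_nonneg htb_pos.le (le_max_right (u x) (0:ℝ))
        linarith)
    · rw [show max (u x) 0 = 0 from max_eq_right h.le, mul_zero, add_zero, neg_neg]
      exact max_eq_left (le_max_right _ _)
  refine ⟨part1, by rw [hp]; linarith, part3, hApos, tb, htb_pos, ?_, ?_, ?_, ?_, ?_⟩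
  · intro t ht
    rw [hffun_eq t ht, hffun_eq tb htb_pos.le]
    linarith [hmax t ht]
  · -- MemH10
    refine ⟨?_, ?_, ?_⟩
    · intro x hx
      have h0 := hu.1 x hx
      simp [Pi.add_apply, Pi.neg_apply, Pi.smul_apply, pPart, nPart, h0]
    · exact (n2.neg).add (p2.const_smul tb)
    · have hfeq : (-nPart u + tb • pPart u) = fun y => -nPart u y + tb * pPart u y := by
        funext y; simp
      rw [hfeq]
      have hae : (fun x => gradient (fun y => -nPart u y + tb * pPart u y) x)
          =ᵐ[volume.restrict Ω]
            (fun x => -gradient (nPart u) x + tb • gradient (pPart u) x) :=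
        ae_restrict_of_ae (ae_grad_w u htb_pos)
      apply MemLp.of_le (hgu.const_smul (1 + tb))
      · exact AEStronglyMeasurable.congr
          (((grad_nPart_aesm hu2 hgu.aestronglyMeasurable).neg).add
            ((grad_pPart_aesm hu2 hgu.aestronglyMeasurable).const_smul tb)) hae.symm
      · filter_upwards [hae] with x hx
        rw [hx]
        have hb : ‖(-gradient (nPart u) x + tb • gradient (pPart u) x)‖
            ≤ (1 + tb) * ‖gradient u x‖ := by
          calc ‖(-gradient (nPart u) x + tb • gradient (pPart u) x)‖
              ≤ ‖-gradient (nPart u) x‖ + ‖tb • gradient (pPart u) x‖ := norm_add_le _ _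
            _ = ‖gradient (nPart u) x‖ + tb * ‖gradient (pPart u) x‖ := by
                rw [norm_neg, norm_smul, Real.norm_eq_abs, abs_of_pos htb_pos]
            _ ≤ ‖gradient u x‖ + tb * ‖gradient u x‖ := by
                have h1 := grad_nPart_norm_le u x
                have h2 := grad_pPart_norm_le u x
                have h3 := mul_le_mul_of_nonneg_left h2 htb_pos.le
                linarith
            _ = (1 + tb) * ‖gradient u x‖ := by ring
        calc ‖(-gradient (nPart u) x + tb • gradient (pPart u) x)‖
            ≤ (1 + tb) * ‖gradient u x‖ := hb
          _ = ‖((1 + tb) • fun x => gradient u x) x‖ := by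
              simp only [Pi.smul_apply, norm_smul, Real.norm_eq_abs]
              rw [abs_of_pos (by linarith)]
  · rw [hnPw]
    exact hn
  · -- Nontriv
    rw [hpPw]
    intro hae0
    have hpz : (fun x => pPart u x ^ 2) =ᵐ[volume.restrict Ω] (fun _ => (0:ℝ)) := by
      filter_upwards [hae0] with x hx
      have h1 : tb * pPart u x = 0 := hx
      have h2 : pPart u x = 0 := by
        rcases mul_eq_zero.1 h1 with h | h
        · exact absurd h htb_pos.ne'
        · exact h
      rw [h2]
      norm_num
    have hz : l2sq Ω (pPart u) = 0 := by
      unfold l2sq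
      exact integral_eq_zero_of_ae hpz
    rw [hp] at hz
    exact one_ne_zero hz
  · -- the constraint equation
    rw [hpPw, hdirE_smul tb htb_pos.ne']
    have h1 : ∫ x in Ω, gfun β ε ((tb • pPart u) x) * (tb • pPart u) x = tb * Dd tb := by
      rw [hDdef]
      simp only
      rw [← integral_const_mul]
      apply integral_congr_ae
      apply ae_of_all
      intro x
      simp only [Pi.smul_apply, smul_eq_mul]
      ring
    rw [h1, hDtb]
    ring

end
end

section
/- For every positive integer k there exists b̃_k > 0 such that α_β < α_{k,β} for all β > b̃_k; i.e., the first nontrivial curve of Σ lies strictly below each of the curves (α_{k,β}, β) for β large. -/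
open MeasureTheory Filter Set
open scoped RealInnerProductSpace ENNReal Topology

noncomputable section

variable {N : ℕ}

lemma aux_compare {w a α : ℝ → ℝ} {l c : ℝ} (hc : 0 < c)
    (hw : ∀ᶠ β in atTop, 0 < w β)
    (ha : Tendsto (fun β => w β * (a β - l)) atTop (𝓝 c))
    (hα : Tendsto (fun β => w β * (α β - l)) atTop (𝓝 0)) :
    ∃ bt : ℝ, ∀ β : ℝ, bt < β → α β < a β := by
  have hsub : Tendsto (fun β => w β * (a β - l) - w β * (α β - l)) atTop (𝓝 (c - 0)) :=
    ha.sub hα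
  rw [sub_zero] at hsub
  have hpos : ∀ᶠ β in atTop, 0 < w β * (a β - l) - w β * (α β - l) :=
    hsub.eventually (eventually_gt_nhds hc)
  have hfin : ∀ᶠ β in atTop, α β < a β := by
    filter_upwards [hw, hpos] with β hw hp
    have : 0 < w β * (a β - α β) := by ring_nf; ring_nf at hp; linarith
    nlinarith
  obtain ⟨bt, hbt⟩ := hfin.exists_forall_of_atTop
  exact ⟨bt, fun β hβ => hbt β hβ.le⟩

theorem stmt19 {N : ℕ} (hN : 2 ≤ N) (Ω : Set (Euc N)) (hΩo : IsOpen Ω)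
    (hΩb : Bornology.IsBounded Ω) (hΩc : IsConnected Ω)
    (lam1 : ℝ) (e1 : Euc N → ℝ) (heig : IsFirstEigen Ω lam1 e1)
    (C : ℝ) (hC : 0 < C) (b : ℕ → ℝ) (ak : ℕ → ℝ → ℝ)
    (hcurve : ∀ k : ℕ, 1 ≤ k → ∀ β : ℝ, b k < β → (ak k β, β) ∈ fucik Ω)
    (hak3 : 3 ≤ N → ∀ k : ℕ, 1 ≤ k →
      Tendsto (fun β : ℝ => β ^ (((N : ℝ) - 2) / 2) * (ak k β - lam1)) atTop
        (𝓝 (C * k)))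
    (hak2 : N = 2 → ∀ k : ℕ, 1 ≤ k →
      Tendsto (fun β : ℝ => Real.log β * (ak k β - lam1)) atTop (𝓝 (C * k)))
    (ha3 : 3 ≤ N →
      Tendsto (fun β : ℝ => β ^ (((N : ℝ) - 2) / 2) * (alphaB Ω β - lam1)) atTop
        (𝓝 0))
    (ha2 : N = 2 →
      Tendsto (fun β : ℝ => Real.log β * (alphaB Ω β - lam1)) atTop (𝓝 0)) :
    ∀ k : ℕ, 1 ≤ k → ∃ bt : ℝ, ∀ β : ℝ, bt < β → alphaB Ω β < ak k β := by
  intro k hk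
  have hck : 0 < C * k := by
    have : (1 : ℝ) ≤ (k : ℝ) := by exact_mod_cast hk
    positivity
  rcases eq_or_lt_of_le hN with h2 | h3
  · have h2' : N = 2 := h2.symm
    refine aux_compare hck ?_ (hak2 h2' k hk) (ha2 h2')
    filter_upwards [eventually_gt_atTop (1:ℝ)] with β hβ
    exact Real.log_pos hβ
  · have h3' : 3 ≤ N := h3
    refine aux_compare hck ?_ (hak3 h3' k hk) (ha3 h3')
    filter_upwards [eventually_gt_atTop (0:ℝ)] with β hβ
    have hNpos : 0 < ((N : ℝ) - 2) / 2 := by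
      have : (3 : ℝ) ≤ (N : ℝ) := by exact_mod_cast h3'
      linarith
    exact Real.rpow_pos_of_pos hβ _

end
end
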